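/- Fix a real constant M > 0, set Ñ₁ = 1, Ñ₂ = M, Ñ₃ = 1, and fix natural numbers i, h, l. On the open set {I₁,I₂,I₃ > 0} ⊂ ℝ⁶ with coordinates (I₁,I₂,I₃,φ¹,φ²,φ³), define the vector fields Γ'_{ih} = (1/(3+i)) Σ_{j=1}^3 Ñ_j^h I_j^{h+1} (∂/∂I_j + ∂/∂φ^j). Then the Lie bracket satisfies L_{Γ'_{ih}}(Γ'_{il}) = [Γ'_{ih}, Γ'_{il}] = ((l − h)/(3+i)) Γ'_{i(l+h)}. -/

import Mathlib

open scoped BigOperators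

/-- Phase space with Delaunay-type coordinates `z.1 = (I₁,I₂,I₃)` and
angles `z.2 = (φ¹,φ²,φ³)`. -/
abbrev PhaseSpace := (Fin 3 → ℝ) × (Fin 3 → ℝ)

/-- Lie bracket of vector fields:
`[X,Y](z) = (DY)(z)·X(z) − (DX)(z)·Y(z)`. -/
noncomputable def lieB (X Y : PhaseSpace → PhaseSpace) (z : PhaseSpace) : PhaseSpace :=
  fderiv ℝ Y z (X z) - fderiv ℝ X z (Y z)

/-- The constants `Ñ₁ = 1, Ñ₂ = M, Ñ₃ = 1`. -/
noncomputable def Ntil (M : ℝ) : Fin 3 → ℝ := ![1, M, 1]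

/-- The vector fields `Γ'_{ih} = (1/(3+i)) Σ_j Ñ_j^h I_j^{h+1} (∂/∂I_j + ∂/∂φ^j)`. -/
noncomputable def Gam' (M : ℝ) (i h : ℕ) (z : PhaseSpace) : PhaseSpace :=
  ((fun j => (1 / (3 + (i : ℝ))) * (Ntil M j) ^ h * (z.1 j) ^ (h + 1)),
   (fun j => (1 / (3 + (i : ℝ))) * (Ntil M j) ^ h * (z.1 j) ^ (h + 1)))

noncomputable def Dg (M : ℝ) (i h : ℕ) (z : PhaseSpace) : (Fin 3 → ℝ) →L[ℝ] (Fin 3 → ℝ) :=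
  ContinuousLinearMap.pi (fun j =>
    ((1 / (3 + (i : ℝ))) * (Ntil M j) ^ h * (((h : ℝ) + 1) * (z.1 j) ^ h)) •
      ContinuousLinearMap.proj j)

noncomputable def DG (M : ℝ) (i h : ℕ) (z : PhaseSpace) : PhaseSpace →L[ℝ] PhaseSpace :=
  ((Dg M i h z).comp (ContinuousLinearMap.fst ℝ _ _)).prod
    ((Dg M i h z).comp (ContinuousLinearMap.fst ℝ _ _))

lemma hasF (M : ℝ) (i h : ℕ) (z : PhaseSpace) :
    HasFDerivAt (Gam' M i h) (DG M i h z) z := by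
  have hg : ∀ j : Fin 3, HasFDerivAt
      (fun z : PhaseSpace => (1 / (3 + (i : ℝ))) * (Ntil M j) ^ h * (z.1 j) ^ (h + 1))
      ((((1 / (3 + (i : ℝ))) * (Ntil M j) ^ h * (((h : ℝ) + 1) * (z.1 j) ^ h)) •
        ((ContinuousLinearMap.proj j).comp (ContinuousLinearMap.fst ℝ (Fin 3 → ℝ) (Fin 3 → ℝ)))) : PhaseSpace →L[ℝ] ℝ) z := by
    intro j
    have h1 : HasFDerivAt (fun z : PhaseSpace => z.1 j)
        ((ContinuousLinearMap.proj j).comp (ContinuousLinearMap.fst ℝ (Fin 3 → ℝ) (Fin 3 → ℝ))) z :=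
      ((ContinuousLinearMap.proj j).comp (ContinuousLinearMap.fst ℝ (Fin 3 → ℝ) (Fin 3 → ℝ))).hasFDerivAt
    have h2 := (hasDerivAt_pow (h+1) (z.1 j)).comp_hasFDerivAt z h1
    have h3 := h2.const_mul ((1 / (3 + (i : ℝ))) * (Ntil M j) ^ h)
    refine h3.congr_fderiv ?_
    rw [smul_smul]
    congr 1
    push_cast
    ring_nf
  have hpi : HasFDerivAt (fun z : PhaseSpace =>
      (fun j => (1 / (3 + (i : ℝ))) * (Ntil M j) ^ h * (z.1 j) ^ (h + 1)))
      ((Dg M i h z).comp (ContinuousLinearMap.fst ℝ (Fin 3 → ℝ) (Fin 3 → ℝ))) z := by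
    rw [hasFDerivAt_pi']
    intro j
    refine (hg j).congr_fderiv ?_
    ext x <;> simp [Dg]
  exact hpi.prodMk hpi

/-- `L_{Γ'_{ih}}(Γ'_{il}) = [Γ'_{ih}, Γ'_{il}] = ((l−h)/(3+i)) Γ'_{i(l+h)}`
on `{I₁,I₂,I₃ > 0}`. -/
theorem stmt17 (M : ℝ) (hM : 0 < M) (i h l : ℕ) :
    ∀ z : PhaseSpace, (∀ j : Fin 3, 0 < z.1 j) →
      lieB (Gam' M i h) (Gam' M i l) z
        = (((l : ℝ) - (h : ℝ)) / (3 + (i : ℝ))) • Gam' M i (l + h) z := by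
  
  intro z hz
  have e1 := (hasF M i h z).fderiv
  have e2 := (hasF M i l z).fderiv
  unfold lieB
  rw [e1, e2]
  have h3i : (3 + (i : ℝ)) ≠ 0 := by positivity
  refine Prod.ext ?_ ?_ <;>
  · funext j
    simp only [DG, Dg, Gam', ContinuousLinearMap.prod_apply, ContinuousLinearMap.comp_apply,
      ContinuousLinearMap.coe_fst', ContinuousLinearMap.pi_apply,
      ContinuousLinearMap.smul_apply, ContinuousLinearMap.proj_apply,
      Prod.fst_sub, Prod.snd_sub, Pi.sub_apply, Prod.smul_fst, Prod.smul_snd,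
      Pi.smul_apply, smul_eq_mul]
    rw [pow_add (Ntil M j)]
    field_simp
    ring
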